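/- Constraint on locality: let s = s(g,a) be a souped-up Lie algebra containing elements a ∈ a and g ∈ g with [g,a] = 1 (the derivation action of g on a applied to a equals the unit of a). Fix any integer N ≥ 1, and let J be the ideal of F(s) generated by all the souped-up generators (i, d, e, qc, qa families as in the souped-up vertex algebra ideal, together with s⟦·,·⟧, a⟦·,·⟧, am⟦·,·,·⟧) and in addition the elements a ∘ₙ g for every n ≥ 1 with n ≠ N (i.e. the locality elements a ∘ₙ g are imposed for all positive n except the single value N). Then 1 ∈ J; hence the locality generators must omit a ∘ₙ g for at least two positive values of n if the quotient is to be nonzero. -/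

import Mathlib

noncomputable section

/-!
Common framework: "infinite free algebras" in the sense of Eller, *Chiral vector bundles*.

An infinite free algebra (completed) is modelled as a topological vector space `F`
over a field `k` of characteristic zero, with a distinguished vector `one` and a
`ℤ`-indexed family of bilinear products `circ n`.  The formal infinite sums provided
by the completion are interpreted by `tsum` (`∑'`).  An ideal is a subspace closed
under all the products (on both sides) and under convergent (formal) infinite sums.
-/

/-- An infinite free algebra (completed). -/
structure IFA (k F : Type) [Field k] [CharZero k] [AddCommGroup F] [Module k F]
    [TopologicalSpace F] where
  /-- the distinguished vector `1` -/
  one : F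
  /-- the products `∘ₙ`; `circ n x y` is `x ∘ₙ y` -/
  circ : ℤ → F → F → F
  circ_add_left : ∀ (n : ℤ) (x x' y : F), circ n (x + x') y = circ n x y + circ n x' y
  circ_add_right : ∀ (n : ℤ) (x y y' : F), circ n x (y + y') = circ n x y + circ n x y'
  circ_smul_left : ∀ (n : ℤ) (c : k) (x y : F), circ n (c • x) y = c • circ n x y
  circ_smul_right : ∀ (n : ℤ) (c : k) (x y : F), circ n x (c • y) = c • circ n x y

namespace IFA

/-- The binomial coefficient `C(m, K)` for `m : ℤ`, `K : ℕ`, as an element of `k`. -/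
def zbinom (k : Type) [Field k] [CharZero k] (m : ℤ) (K : ℕ) : k :=
  (∏ i ∈ Finset.range K, ((m : k) - (i : k))) / (K.factorial : k)

variable {k F : Type} [Field k] [CharZero k] [AddCommGroup F] [Module k F]
  [TopologicalSpace F] (A : IFA k F)

/-- `D x := x ∘₋₂ 1`. -/
def D (x : F) : F := A.circ (-2) x A.one

/-- identity generators `i⟦x;n⟧ := 1ₙx − δ_{n,−1}x` -/
def geni (x : F) (n : ℤ) : F := A.circ n A.one x - (if n = -1 then x else 0)

/-- derivation generators `d⟦x,y;n⟧ := D(xₙy) − (Dx)ₙy − xₙ(Dy)` -/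
def gend (x y : F) (n : ℤ) : F :=
  A.D (A.circ n x y) - A.circ n (A.D x) y - A.circ n x (A.D y)

/-- shift generators `e⟦x,y;n⟧ := (Dx)ₙy + n·x_{n−1}y` -/
def gene (x y : F) (n : ℤ) : F := A.circ n (A.D x) y + (n : k) • A.circ (n - 1) x y

/-- quasi-commutativity generators
`qc⟦x,y;n⟧ := xₙy + Σ_{K≥0}((−1)^{n+K}/K!)·D^K(y_{n+K}x)` -/
def genqc (x y : F) (n : ℤ) : F :=
  A.circ n x y +
    ∑' K : ℕ, (((-1 : k) ^ (n + (K : ℤ))) * ((K.factorial : k)⁻¹)) •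
      (A.D)^[K] (A.circ (n + (K : ℤ)) y x)

/-- quasi-associativity generators
`qa⟦x,y,z;m,n⟧ := (x_my)_nz − Σ_{K≥0} C(m,K)(−1)^K (x_{m−K}(y_{n+K}z) − (−1)^m y_{m+n−K}(x_Kz))` -/
def genqa (x y z : F) (m n : ℤ) : F :=
  A.circ n (A.circ m x y) z -
    ∑' K : ℕ, ((zbinom k m K) * ((-1 : k) ^ K)) •
      (A.circ (m - (K : ℤ)) x (A.circ (n + (K : ℤ)) y z)
        - ((-1 : k) ^ m) • A.circ (m + n - (K : ℤ)) y (A.circ (K : ℤ) x z))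

/-- An ideal of the (completed) infinite free algebra: a subspace closed under all the
products `∘ₙ` by arbitrary elements on both sides, and under the formal (convergent)
infinite sums provided by the completion. -/
def IsIdeal (J : Submodule k F) : Prop :=
  (∀ (n : ℤ) (x y : F), y ∈ J → A.circ n x y ∈ J ∧ A.circ n y x ∈ J) ∧
    (∀ f : ℕ → F, (∀ i, f i ∈ J) → Summable f → (∑' i, f i) ∈ J)

/-- The ideal generated by a set `S ⊆ F`. -/
def idealGenBy (S : Set F) : Submodule k F := sInf {J | A.IsIdeal J ∧ S ⊆ J}

/-- The generators of the vertex algebra ideal other than the locality generators: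
`i⟦x;n⟧, d⟦x,y;n⟧, qc⟦x,y;n⟧` for `n = −1` and all `n ≥ 0`; `qa⟦x,y,z;m,n⟧` for
`m, n ∈ {−1,0,1,2,…}`; and `e⟦x,y;n⟧` for all `n ∈ ℤ`. -/
def baseGens : Set F :=
  {w | ∃ (x : F) (n : ℤ), -1 ≤ n ∧ w = A.geni x n} ∪
  {w | ∃ (x y : F) (n : ℤ), -1 ≤ n ∧ w = A.gend x y n} ∪
  {w | ∃ (x y : F) (n : ℤ), -1 ≤ n ∧ w = A.genqc x y n} ∪
  {w | ∃ (x y z : F) (m n : ℤ), -1 ≤ m ∧ -1 ≤ n ∧ w = A.genqa x y z m n} ∪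
  {w | ∃ (x y : F) (n : ℤ), w = A.gene x y n}

/-- The vertex algebra ideal `I` associated to the locality function `N : F × F → ℕ`:
the ideal generated by the base generators together with the locality elements
`xₙy` for all `x, y ∈ F` and `n ≥ N(x,y)`. -/
def vertexIdeal (N : F → F → ℕ) : Submodule k F :=
  A.idealGenBy
    (A.baseGens ∪ {w | ∃ (x y : F) (n : ℤ), (N x y : ℤ) ≤ n ∧ w = A.circ n x y})

end IFA
/-!
Concrete construction of the (completed) infinite free algebra `F(v)` generated by a
unital vector space `v`: product shapes are binary trees with integer-labelled internal
nodes; the span of the monomials of a fixed shape is the corresponding iterated tensor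
power of `v`; and the completion (allowing formal infinite sums of monomials of pairwise
distinct product shapes) is the direct product over all shapes.  Each shape component
carries the discrete topology and `F(v)` the product topology, so that a family is
summable exactly when every shape component receives only finitely many contributions.
-/

/-- Product shapes: full binary rooted trees with an integer at each internal node. -/
inductive Shape : Type
  | leaf : Shape
  | node : ℤ → Shape → Shape → Shape
  deriving DecidableEq

/-- A bundled `k`-vector space. -/
structure MC (k : Type) [Field k] where
  T : Type
  [grp : AddCommGroup T]
  [mod : Module k T]

attribute [instance] MC.grp MC.mod

variable (k : Type) [Field k] [CharZero k] (V : Type) [AddCommGroup V] [Module k V]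

/-- The space spanned by the monomials of a given product shape (bundled). -/
def monData : Shape → MC k
  | .leaf => MC.mk V
  | .node _ l r => MC.mk (TensorProduct k (monData l).T (monData r).T)

/-- The space spanned by the monomials of a given product shape. -/
abbrev MonSp (s : Shape) : Type := (monData k V s).T

instance (s : Shape) : TopologicalSpace (MonSp k V s) := ⊥

/-- The completed infinite free algebra `F(v)` on the (unital) vector space `v = V`. -/
abbrev FV : Type := ∀ s : Shape, MonSp k V s

/-- The embedding of the generating space `v` into `F(v)` (the length-1 component). -/
def ι (a : V) : FV k V := fun s =>
  match s with
  | .leaf => a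
  | .node _ _ _ => 0

/-- The product `x ∘ₙ y` on `F(v)`. -/
def op (n : ℤ) (x y : FV k V) : FV k V := fun s =>
  match s with
  | .leaf => 0
  | .node m l r => if n = m then TensorProduct.tmul k (x l) (y r) else 0

/-- `F(v)` as an infinite free algebra, with distinguished vector the image of the
distinguished vector `e ∈ v`. -/
def freeIFA (e : V) : IFA k (FV k V) where
  one := ι k V e
  circ := op k V
  circ_add_left := by
    intro n x x' y; funext s
    cases s with
    | leaf => simp [op]
    | node m l r =>
        by_cases h : n = m <;>
          simp [op, h, Pi.add_apply, TensorProduct.add_tmul] <;> rfl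
  circ_add_right := by
    intro n x y y'; funext s
    cases s with
    | leaf => simp [op]
    | node m l r =>
        by_cases h : n = m <;>
          simp [op, h, Pi.add_apply, TensorProduct.tmul_add] <;> rfl
  circ_smul_left := by
    intro n c x y; funext s
    cases s with
    | leaf => simp [op]
    | node m l r =>
        by_cases h : n = m
        · simp [op, h]; exact (TensorProduct.smul_tmul' c (x l) (y r)).symm
        · simp [op, h]
  circ_smul_right := by
    intro n c x y; funext s
    cases s with
    | leaf => simp [op]
    | node m l r =>
        by_cases h : n = m <;>
          simp [op, h, Pi.smul_apply, TensorProduct.tmul_smul] <;> rfl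

/-- The vertex algebra ideal `I(v)` of `F(v)`: generated by the base generators
together with the locality elements `uₙv` for `u, v ∈ v` (the generating space) and
`n ≥ N(u,v)`. -/
def genVertexIdeal (e : V) (N : V → V → ℕ) : Submodule k (FV k V) :=
  (freeIFA k V e).idealGenBy
    ((freeIFA k V e).baseGens ∪
      {w | ∃ (a b : V) (n : ℤ), (N a b : ℤ) ≤ n ∧ w = op k V n (ι k V a) (ι k V b)})
/-!
Souped-up Lie algebras `s = s(g, a)`: an associative commutative unital `k`-algebra `a`
and a `k`-Lie algebra `g` such that `g` is a left `a`-module, `a` is a `g`-module on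
which `g` acts by derivations, compatibly.  The underlying unital vector space of the
semidirect sum `s = g ⊕ a` is modelled as `L × A` with distinguished vector `(0, 1)`.
-/

/-- The action data making `(g, a) = (L, A)` a souped-up Lie algebra: `g` acts on `a`
by derivations, the action is a Lie algebra action, and it is compatible with the
`a`-module structure of `g` in that `[g, a·h] = [g,a]·h + a·[g,h]`. -/
structure SoupAct (k A L : Type) [Field k] [CharZero k] [CommRing A] [Algebra k A]
    [LieRing L] [LieAlgebra k L] [Module A L] [IsScalarTower k A L] where
  act : L →ₗ[k] A →ₗ[k] A
  act_deriv : ∀ (g : L) (a b : A), act g (a * b) = act g a * b + a * act g b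
  act_bracket : ∀ (g h : L) (a : A), act ⁅g, h⁆ a = act g (act h a) - act h (act g a)
  act_smul_bracket : ∀ (g : L) (a : A) (h : L), ⁅g, a • h⁆ = act g a • h + a • ⁅g, h⁆

namespace SoupAct

variable {k A L : Type} [Field k] [CharZero k] [CommRing A] [Algebra k A]
  [LieRing L] [LieAlgebra k L] [Module A L] [IsScalarTower k A L]

/-- The Lie bracket of the semidirect sum Lie algebra `s = g ⊕ a` (`a` abelian):
`[(g,a), (h,b)] = ([g,h], g·b − h·a)`. -/
def sBracket (σ : SoupAct k A L) (p q : L × A) : L × A :=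
  (⁅p.1, q.1⁆, σ.act p.1 q.2 - σ.act q.1 p.2)

end SoupAct

/-- Left multiplication by `a ∈ a` on `s = g ⊕ a`. -/
def aMul {A L : Type} [Mul A] [SMul A L] (c : A) (p : L × A) : L × A :=
  (c • p.1, c * p.2)

/-- The distinguished vector `1 = (0, 1)` of `s`. -/
def sOne (A L : Type) [CommRing A] [LieRing L] : L × A := ((0 : L), (1 : A))

variable (k : Type) [Field k] [CharZero k] (A : Type) [CommRing A] [Algebra k A]
  (L : Type) [LieRing L] [LieAlgebra k L] [Module A L] [IsScalarTower k A L]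

/-- The additional generators of the souped-up vertex algebra ideal:
`s⟦s,t⟧ := s₀t − [s,t]`, `a⟦a,s⟧ := a₋₁s − a·s`, and
`am⟦a,b,x⟧ := (ab)₋₁x − a₋₁(b₋₁x)` (the latter being linear in `x`, it is imposed for
all `x ∈ F(s)`, equivalently for all monomials). -/
def soupGens (σ : SoupAct k A L) : Set (FV k (L × A)) :=
  {w | ∃ p q : L × A,
      w = op k (L × A) 0 (ι k (L × A) p) (ι k (L × A) q) - ι k (L × A) (σ.sBracket p q)} ∪
  {w | ∃ (c : A) (p : L × A),
      w = op k (L × A) (-1) (ι k (L × A) ((0 : L), c)) (ι k (L × A) p)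
            - ι k (L × A) (aMul c p)} ∪
  {w | ∃ (c d : A) (x : FV k (L × A)),
      w = op k (L × A) (-1) (ι k (L × A) ((0 : L), c * d)) x
            - op k (L × A) (-1) (ι k (L × A) ((0 : L), c))
                (op k (L × A) (-1) (ι k (L × A) ((0 : L), d)) x)}

/-- The full generating set of the souped-up vertex algebra ideal `I(s)`. -/
def soupGensAll (σ : SoupAct k A L) (N : (L × A) → (L × A) → ℕ) : Set (FV k (L × A)) :=
  (freeIFA k (L × A) (sOne A L)).baseGens ∪
    {w | ∃ (p q : L × A) (n : ℤ), (N p q : ℤ) ≤ n ∧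
        w = op k (L × A) n (ι k (L × A) p) (ι k (L × A) q)} ∪
    soupGens k A L σ

/-- The souped-up vertex algebra ideal `I(s)` associated to the locality function
`N : s × s → ℕ`. -/
def soupIdeal (σ : SoupAct k A L) (N : (L × A) → (L × A) → ℕ) :
    Submodule k (FV k (L × A)) :=
  (freeIFA k (L × A) (sOne A L)).idealGenBy (soupGensAll k A L σ N)

/-! ### Auxiliary infrastructure for statement13 -/

section Aux13

variable {k' : Type} [Field k'] [CharZero k'] {V : Type} [AddCommGroup V] [Module k' V]

instance (s : Shape) : DiscreteTopology (MonSp k' V s) := ⟨rfl⟩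

instance (s : Shape) : ContinuousAdd (MonSp k' V s) := ⟨continuous_of_discreteTopology⟩

lemma op_leaf' (n : ℤ) (x y : FV k' V) : op k' V n x y Shape.leaf = 0 := rfl

lemma op_node' (n m : ℤ) (l r : Shape) (x y : FV k' V) :
    op k' V n x y (Shape.node m l r) =
      if n = m then TensorProduct.tmul k' (x l) (y r) else 0 := rfl

lemma op_add_right' (n : ℤ) (x y y' : FV k' V) :
    op k' V n x (y + y') = op k' V n x y + op k' V n x y' := by
  funext s
  cases s with
  | leaf => simp [op]
  | node m l r => by_cases h : n = m <;> simp [op, h, TensorProduct.tmul_add] <;> rfl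

lemma op_add_left' (n : ℤ) (x x' y : FV k' V) :
    op k' V n (x + x') y = op k' V n x y + op k' V n x' y := by
  funext s
  cases s with
  | leaf => simp [op]
  | node m l r => by_cases h : n = m <;> simp [op, h, TensorProduct.add_tmul] <;> rfl

lemma op_neg_right' (n : ℤ) (x y : FV k' V) :
    op k' V n x (-y) = -op k' V n x y := by
  funext s
  cases s with
  | leaf => simp [op]
  | node m l r => by_cases h : n = m <;> simp [op, h, TensorProduct.tmul_neg] <;> rfl

lemma op_sub_right' (n : ℤ) (x y y' : FV k' V) :
    op k' V n x (y - y') = op k' V n x y - op k' V n x y' := by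
  rw [sub_eq_add_neg, op_add_right', op_neg_right', sub_eq_add_neg]

lemma op_neg_left' (n : ℤ) (x y : FV k' V) :
    op k' V n (-x) y = -op k' V n x y := by
  funext s
  cases s with
  | leaf => simp [op]
  | node m l r => by_cases h : n = m <;> simp [op, h, TensorProduct.neg_tmul] <;> rfl

lemma op_sub_left' (n : ℤ) (x x' y : FV k' V) :
    op k' V n (x - x') y = op k' V n x y - op k' V n x' y := by
  rw [sub_eq_add_neg, op_add_left', op_neg_left', sub_eq_add_neg]

lemma ι_add' (p q : V) : ι k' V (p + q) = ι k' V p + ι k' V q := by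
  funext s
  cases s with
  | leaf => rfl
  | node m l r => simp [ι]

lemma ι_neg' (p : V) : ι k' V (-p) = -ι k' V p := by
  funext s
  cases s with
  | leaf => rfl
  | node m l r => simp [ι]

/-- Master summability lemma: a family whose shape components are eventually zero
(with an explicit bound) has the componentwise sum as its sum. -/
lemma hasSum_of_bound (f : ℕ → FV k' V) (B : Shape → ℕ)
    (hB : ∀ s K, B s ≤ K → f K s = 0) :
    HasSum f (fun s => ∑ K ∈ Finset.range (B s), f K s) := by
  rw [HasSum, tendsto_pi_nhds]
  intro s
  rw [nhds_discrete, Filter.tendsto_pure]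
  refine Filter.eventually_atTop.2 ⟨Finset.range (B s), fun t ht => ?_⟩
  rw [Finset.sum_apply]
  exact (Finset.sum_subset ht (fun K _ hK => hB s K (by simpa using hK))).symm

end Aux13

set_option linter.unusedSectionVars false in
lemma freeIFA_circ' {k' : Type} [Field k'] [CharZero k'] {V : Type} [AddCommGroup V]
    [Module k' V] (e : V) : (freeIFA k' V e).circ = op k' V := rfl

set_option linter.unusedSectionVars false in
lemma freeIFA_one' {k' : Type} [Field k'] [CharZero k'] {V : Type} [AddCommGroup V]
    [Module k' V] (e : V) : (freeIFA k' V e).one = ι k' V e := rfl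

set_option linter.unusedSectionVars false in
lemma zbinom_neg_one' (k' : Type) [Field k'] [CharZero k'] (K : ℕ) :
    IFA.zbinom k' (-1) K = (-1 : k') ^ K := by
  have hp : ∏ i ∈ Finset.range K, ((-1 : k') - i) = (-1) ^ K * K.factorial := by
    induction K with
    | zero => simp
    | succ K ih =>
        rw [Finset.prod_range_succ, ih, Nat.factorial_succ, pow_succ]
        push_cast; ring
  rw [IFA.zbinom]
  push_cast
  rw [hp, mul_div_assoc, div_self (Nat.cast_ne_zero.2 K.factorial_ne_zero), mul_one]

lemma neg_one_zpow_neg_one' (k' : Type) [Field k'] : ((-1 : k') ^ (-1 : ℤ)) = -1 := by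
  rw [zpow_neg_one, inv_neg_one]

/-- bound function for the quasi-associativity family -/
def shBound13 (N : ℕ) : Shape → ℕ
  | .leaf => 0
  | .node m _ _ => ((-1 - m).toNat ⊔ (-1 + -1 - m).toNat) + 1

/-- left depth of a shape -/
def depthL13 : Shape → ℕ
  | .leaf => 0
  | .node _ l _ => depthL13 l + 1

set_option linter.unusedSectionVars false in
set_option maxHeartbeats 1000000 in
lemma key13 (σ : SoupAct k A L) (a : A) (g : L) (hga : σ.act g a = 1)
    (N : ℕ) (hN : 1 ≤ N) (J : Submodule k (FV k (L × A)))
    (hI : (freeIFA k (L × A) (sOne A L)).IsIdeal J)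
    (hS : ((freeIFA k (L × A) (sOne A L)).baseGens ∪ soupGens k A L σ ∪
          {w | ∃ n : ℤ, 1 ≤ n ∧ n ≠ (N : ℤ) ∧
            w = op k (L × A) n (ι k (L × A) ((0 : L), a))
                  (ι k (L × A) (g, (0 : A)))}) ⊆ J) :
    ι k (L × A) (sOne A L) ∈ J := by
  -- abbreviations
  set avec : FV k (L × A) := ι k (L × A) ((0 : L), a) with havec
  set gvec : FV k (L × A) := ι k (L × A) (g, (0 : A)) with hgvec
  set one1 : FV k (L × A) := ι k (L × A) (sOne A L) with hone1
  -- generator access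
  have hbase : (freeIFA k (L × A) (sOne A L)).baseGens ⊆ J :=
    fun x hx => hS (Or.inl (Or.inl hx))
  have hsoup : soupGens k A L σ ⊆ J := fun x hx => hS (Or.inl (Or.inr hx))
  have hloc : ∀ n : ℤ, 1 ≤ n → n ≠ (N : ℤ) → op k (L × A) n avec gvec ∈ J :=
    fun n h1 h2 => hS (Or.inr ⟨n, h1, h2, rfl⟩)
  have hqa : ∀ (x y z : FV k (L × A)) (m n : ℤ), -1 ≤ m → -1 ≤ n →
      (freeIFA k (L × A) (sOne A L)).genqa x y z m n ∈ J :=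
    fun x y z m n hm hn => hbase (Or.inl (Or.inr ⟨x, y, z, m, n, hm, hn, rfl⟩))
  have hgene : ∀ (x y : FV k (L × A)) (n : ℤ),
      (freeIFA k (L × A) (sOne A L)).gene x y n ∈ J :=
    fun x y n => hbase (Or.inr ⟨x, y, n, rfl⟩)
  have hsgen : ∀ p q : L × A,
      op k (L × A) 0 (ι k (L × A) p) (ι k (L × A) q) - ι k (L × A) (σ.sBracket p q) ∈ J :=
    fun p q => hsoup (Or.inl (Or.inl ⟨p, q, rfl⟩))
  have hagen : ∀ (c : A) (p : L × A),
      op k (L × A) (-1) (ι k (L × A) ((0 : L), c)) (ι k (L × A) p)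
        - ι k (L × A) (aMul c p) ∈ J :=
    fun c p => hsoup (Or.inl (Or.inr ⟨c, p, rfl⟩))
  -- ideal closure operations
  have hR : ∀ (n : ℤ) (x : FV k (L × A)) {y : FV k (L × A)}, y ∈ J →
      op k (L × A) n x y ∈ J := fun n x {y} hy => (hI.1 n x y hy).1
  have hL : ∀ (n : ℤ) {y : FV k (L × A)} (x : FV k (L × A)), y ∈ J →
      op k (L × A) n y x ∈ J := fun n {y} x hy => (hI.1 n x y hy).2
  -- Step 1 : a₀g + 1 ∈ J
  have h1 : op k (L × A) 0 avec gvec + one1 ∈ J := by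
    have hb := hsgen ((0 : L), a) (g, (0 : A))
    have hbr : σ.sBracket ((0 : L), a) (g, (0 : A)) = ((0 : L), (-1 : A)) := by
      simp [SoupAct.sBracket, hga]
    have hneg : ι k (L × A) (((0 : L), (-1 : A))) = -one1 := by
      rw [hone1, show (((0 : L), (-1 : A)) : L × A) = -((0 : L), (1 : A)) by simp, sOne]
      exact ι_neg' _
    rw [hbr, hneg, sub_neg_eq_add] at hb
    exact hb
  -- Step 2 : a₋₁g ≡ (a•g, 0)
  have hag : op k (L × A) (-1) avec gvec - ι k (L × A) (a • g, (0 : A)) ∈ J := by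
    have hb := hagen a (g, (0 : A))
    rwa [show aMul a ((g : L), (0 : A)) = (a • g, (0 : A)) by simp [aMul]] at hb
  -- Step 3 : a₋₁(a₋₁ g) ≡ ((a*a)•g, 0)
  have haag : op k (L × A) (-1) avec (op k (L × A) (-1) avec gvec)
      - ι k (L × A) ((a * a) • g, (0 : A)) ∈ J := by
    have hstep : op k (L × A) (-1) avec (op k (L × A) (-1) avec gvec)
        - op k (L × A) (-1) avec (ι k (L × A) (a • g, (0 : A))) ∈ J := by
      rw [← op_sub_right']; exact hR _ _ hag
    have hb := hagen a (a • g, (0 : A))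
    rw [show aMul a ((a • g : L), (0 : A)) = ((a * a) • g, (0 : A)) by
      simp [aMul, smul_smul]] at hb
    have := J.add_mem hstep hb
    rwa [sub_add_sub_cancel] at this
  -- Step 4+5 : (a₋₁a)₋₁g ≡ ((a*a)•g, 0)
  have hLHS : op k (L × A) (-1) (op k (L × A) (-1) avec avec) gvec
      - ι k (L × A) ((a * a) • g, (0 : A)) ∈ J := by
    have haa : op k (L × A) (-1) avec avec - ι k (L × A) ((0 : L), a * a) ∈ J := by
      have hb := hagen a ((0 : L), a)
      rwa [show aMul a (((0 : L) : L), a) = ((0 : L), a * a) by simp [aMul]] at hb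
    have hstep : op k (L × A) (-1) (op k (L × A) (-1) avec avec) gvec
        - op k (L × A) (-1) (ι k (L × A) ((0 : L), a * a)) gvec ∈ J := by
      rw [← op_sub_left']; exact hL _ _ haa
    have hb := hagen (a * a) (g, (0 : A))
    rw [show aMul (a * a) ((g : L), (0 : A)) = ((a * a) • g, (0 : A)) by simp [aMul]] at hb
    have := J.add_mem hstep hb
    rwa [sub_add_sub_cancel] at this
  -- the special vectors
  set wvec : FV k (L × A) := op k (L × A) (N : ℤ) avec gvec with hwvec
  set Da : FV k (L × A) := op k (L × A) (-2) avec one1 with hDa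
  set uu : FV k (L × A) := op k (L × A) (-(N : ℤ) - 2) avec wvec with huu
  -- Step 7 : Da - uu ∈ J  (the key quasi-associativity computation)
  have hE1 : Da - uu ∈ J := by
    classical
    set t1 : ℕ → FV k (L × A) := fun K =>
      op k (L × A) (-1 - (K : ℤ)) avec (op k (L × A) (-1 + (K : ℤ)) avec gvec) with ht1
    set t2 : ℕ → FV k (L × A) := fun K =>
      op k (L × A) (-1 + -1 - (K : ℤ)) avec (op k (L × A) (K : ℤ) avec gvec) with ht2
    have hg := hqa avec avec gvec (-1) (-1) le_rfl le_rfl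
    simp only [IFA.genqa, freeIFA_circ'] at hg
    have hbody : ∀ K : ℕ, (IFA.zbinom k (-1) K * (-1 : k) ^ K) •
        (op k (L × A) (-1 - (K : ℤ)) avec (op k (L × A) (-1 + (K : ℤ)) avec gvec)
          - ((-1 : k) ^ (-1 : ℤ)) • op k (L × A) (-1 + -1 - (K : ℤ)) avec
              (op k (L × A) (K : ℤ) avec gvec)) = t1 K + t2 K := by
      intro K
      rw [zbinom_neg_one' k K, ← mul_pow, neg_mul_neg, one_mul, one_pow, one_smul,
        neg_one_zpow_neg_one' k, neg_smul, sub_neg_eq_add, one_smul]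
    rw [tsum_congr hbody] at hg
    -- split the sum
    set fE : ℕ → FV k (L × A) := fun K => if K < N + 2 then t1 K + t2 K else 0 with hfE
    set fR : ℕ → FV k (L × A) := fun K => if K < N + 2 then 0 else t1 K + t2 K with hfR
    have hTsplit : ∀ K, t1 K + t2 K = fE K + fR K := by
      intro K; simp only [hfE, hfR]; by_cases h : K < N + 2 <;> simp [h]
    have hEsum : HasSum fE (∑ K ∈ Finset.range (N + 2), fE K) :=
      hasSum_sum_of_ne_finset_zero (fun b hb => by
        simp only [hfE]; rw [if_neg (by simpa using hb)])
    have hRsum : HasSum fR (fun s => ∑ K ∈ Finset.range (shBound13 N s), fR K s) := by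
      apply hasSum_of_bound
      intro s K hK
      cases s with
      | leaf =>
          by_cases h : K < N + 2
          · simp only [hfR, if_pos h]; rfl
          · simp only [hfR, if_neg h]
            show (t1 K + t2 K) Shape.leaf = 0
            rw [Pi.add_apply]
            simp only [ht1, ht2]
            rw [op_leaf', op_leaf', add_zero]
      | node m l r =>
          by_cases h : K < N + 2
          · simp only [hfR, if_pos h]; rfl
          · simp only [hfR, if_neg h]
            have hlt : ((-1 - m).toNat ⊔ (-1 + -1 - m).toNat) + 1 ≤ K := by
              simpa [shBound13] using hK
            have h1 : ¬ ((-1 : ℤ) - K = m) := by omega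
            have h2 : ¬ ((-1 : ℤ) + -1 - K = m) := by omega
            show (t1 K + t2 K) (Shape.node m l r) = 0
            rw [Pi.add_apply]
            simp only [ht1, ht2]
            rw [op_node', op_node', if_neg h1, if_neg h2]; exact add_zero _
    have hfRJ : ∀ K, fR K ∈ J := by
      intro K
      simp only [hfR]
      by_cases h : K < N + 2
      · rw [if_pos h]; exact J.zero_mem
      · rw [if_neg h]
        push_neg at h
        refine J.add_mem ?_ ?_
        · simp only [ht1]; exact hR _ _ (hloc _ (by omega) (by omega))
        · simp only [ht2]; exact hR _ _ (hloc _ (by omega) (by omega))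
    have hfRtsum : (fun s => ∑ K ∈ Finset.range (shBound13 N s), fR K s) ∈ J := by
      have := hI.2 fR hfRJ ⟨_, hRsum⟩
      rwa [hRsum.tsum_eq] at this
    have hTot : HasSum (fun K => t1 K + t2 K)
        ((∑ K ∈ Finset.range (N + 2), fE K)
          + fun s => ∑ K ∈ Finset.range (shBound13 N s), fR K s) := by
      have h := hEsum.add hRsum
      have : (fun K => fE K + fR K) = fun K => t1 K + t2 K := by
        funext K; rw [← hTsplit]
      rwa [this] at h
    rw [hTot.tsum_eq] at hg
    have hSE : ∑ K ∈ Finset.range (N + 2), fE K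
        = ∑ K ∈ Finset.range (N + 2), (t1 K + t2 K) :=
      Finset.sum_congr rfl fun K hK => by
        simp only [hfE]; rw [if_pos (Finset.mem_range.1 hK)]
    rw [hSE, Finset.sum_add_distrib] at hg
    -- peel off the exceptional indices
    have h0m : (0 : ℕ) ∈ Finset.range (N + 2) := Finset.mem_range.2 (by omega)
    have h1m : (1 : ℕ) ∈ (Finset.range (N + 2)).erase 0 := by
      rw [Finset.mem_erase]; exact ⟨by omega, Finset.mem_range.2 (by omega)⟩
    have hN1m : (N + 1 : ℕ) ∈ ((Finset.range (N + 2)).erase 0).erase 1 := by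
      rw [Finset.mem_erase, Finset.mem_erase]
      exact ⟨by omega, by omega, Finset.mem_range.2 (by omega)⟩
    have hNm : (N : ℕ) ∈ (Finset.range (N + 2)).erase 0 := by
      rw [Finset.mem_erase]; exact ⟨by omega, Finset.mem_range.2 (by omega)⟩
    rw [← Finset.sum_erase_add _ t1 h0m, ← Finset.sum_erase_add _ t1 h1m,
      ← Finset.sum_erase_add _ t1 hN1m,
      ← Finset.sum_erase_add _ t2 h0m, ← Finset.sum_erase_add _ t2 hNm] at hg
    -- memberships of the regular parts
    have hRR1 : (∑ K ∈ (((Finset.range (N + 2)).erase 0).erase 1).erase (N + 1), t1 K) ∈ J := by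
      refine Submodule.sum_mem _ fun K hK => ?_
      simp only [Finset.mem_erase, Finset.mem_range] at hK
      obtain ⟨hKN1, hK1, hK0, hKlt⟩ := hK
      simp only [ht1]
      exact hR _ _ (hloc _ (by omega) (by omega))
    have hRR2 : (∑ K ∈ ((Finset.range (N + 2)).erase 0).erase N, t2 K) ∈ J := by
      refine Submodule.sum_mem _ fun K hK => ?_
      simp only [Finset.mem_erase, Finset.mem_range] at hK
      obtain ⟨hKN, hK0, hKlt⟩ := hK
      simp only [ht2]
      exact hR _ _ (hloc _ (by omega) (by omega))
    -- exceptional values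
    have ht1N1 : t1 (N + 1) = uu := by
      simp only [ht1, huu, hwvec]
      rw [show (-1 : ℤ) - ((N + 1 : ℕ) : ℤ) = -(N : ℤ) - 2 by push_cast; ring,
        show (-1 : ℤ) + ((N + 1 : ℕ) : ℤ) = (N : ℤ) by push_cast; ring]
    have ht2N : t2 N = uu := by
      simp only [ht2, huu, hwvec]
      rw [show (-1 : ℤ) + -1 - (N : ℤ) = -(N : ℤ) - 2 by ring]
    have ht10 : t1 0 - ι k (L × A) ((a * a) • g, (0 : A)) ∈ J := by
      simp only [ht1]
      rw [show (-1 : ℤ) - ((0 : ℕ) : ℤ) = -1 by norm_num,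
        show (-1 : ℤ) + ((0 : ℕ) : ℤ) = -1 by norm_num]
      exact haag
    have ht11 : t1 1 + Da ∈ J := by
      simp only [ht1, hDa]
      rw [show (-1 : ℤ) - ((1 : ℕ) : ℤ) = -2 by norm_num,
        show (-1 : ℤ) + ((1 : ℕ) : ℤ) = 0 by norm_num, ← op_add_right']
      exact hR _ _ h1
    have ht20 : t2 0 + Da ∈ J := by
      simp only [ht2, hDa]
      rw [show (-1 : ℤ) + -1 - ((0 : ℕ) : ℤ) = -2 by norm_num,
        show ((0 : ℕ) : ℤ) = 0 from rfl, ← op_add_right']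
      exact hR _ _ h1
    rw [ht1N1, ht2N] at hg
    -- final combination
    set R1 := ∑ K ∈ (((Finset.range (N + 2)).erase 0).erase 1).erase (N + 1), t1 K with hR1d
    set R2 := ∑ K ∈ ((Finset.range (N + 2)).erase 0).erase N, t2 K with hR2d
    set SR := (fun s => ∑ K ∈ Finset.range (shBound13 N s), fR K s) with hSRd
    set P := op k (L × A) (-1) (op k (L × A) (-1) avec avec) gvec with hPd
    set W := ι k (L × A) ((a * a) • g, (0 : A)) with hWd
    have hfin : (uu + uu) - (Da + Da) ∈ J := by
      have heq : (P - W) - (P - (R1 + uu + t1 1 + t1 0 + (R2 + uu + t2 0) + SR))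
          - R1 - R2 - SR - (t1 0 - W) - (t1 1 + Da) - (t2 0 + Da)
          = (uu + uu) - (Da + Da) := by abel
      rw [← heq]
      exact J.sub_mem (J.sub_mem (J.sub_mem (J.sub_mem (J.sub_mem (J.sub_mem
        (J.sub_mem hLHS hg) hRR1) hRR2) hfRtsum) ht10) ht11) ht20
    have h2 : (2 : k) • (Da - uu) ∈ J := by
      have he : (2 : k) • (Da - uu) = -((uu + uu) - (Da + Da)) := by
        rw [two_smul]; abel
      rw [he]; exact J.neg_mem hfin
    have h3 := J.smul_mem ((2 : k)⁻¹) h2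
    rwa [smul_smul, inv_mul_cancel₀ (by norm_num : (2 : k) ≠ 0), one_smul] at h3
  -- Step 8 : Da - Φ Da ∈ J, fixed point property
  -- Step 9 : telescope, Da ∈ J
  have hDaJ : Da ∈ J := by
    set Φ : FV k (L × A) → FV k (L × A) :=
      fun ξ => ((N : k) + 1)⁻¹ • op k (L × A) (-(N : ℤ) - 1) ξ wvec with hPhi
    have hNk : ((N : k) + 1) ≠ 0 := by
      have h : ((N : k) + 1) = ((N + 1 : ℕ) : k) := by push_cast; ring
      rw [h]
      exact_mod_cast Nat.succ_ne_zero N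
    have hPhiJ : ∀ {ξ}, ξ ∈ J → Φ ξ ∈ J := fun {ξ} h => by
      simp only [hPhi]; exact J.smul_mem _ (hL _ _ h)
    have hPhiSub : ∀ ξ η, Φ (ξ - η) = Φ ξ - Φ η := by
      intro ξ η; simp only [hPhi]; rw [op_sub_left', smul_sub]
    -- fixed-point property : Da - Φ Da ∈ J
    have hfix : Da - Φ Da ∈ J := by
      have he := hgene avec wvec (-(N : ℤ) - 1)
      rw [IFA.gene, freeIFA_circ', IFA.D, freeIFA_circ', freeIFA_one'] at he
      rw [show (-(N : ℤ) - 1) - 1 = -(N : ℤ) - 2 by ring] at he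
      rw [show ((-(N : ℤ) - 1 : ℤ) : k) = -((N : k) + 1) by push_cast; ring] at he
      rw [← hone1, ← hDa, ← huu] at he
      -- he : op (-(N : ℤ) - 1) Da wvec + (-((N : k) + 1)) • uu ∈ J
      have hPhiDa : Φ Da = ((N : k) + 1)⁻¹ • op k (L × A) (-(N : ℤ) - 1) Da wvec := by
        simp only [hPhi]
      have hPhiu : Φ Da - uu ∈ J := by
        have h2 := J.smul_mem (((N : k) + 1)⁻¹) he
        rwa [smul_add, smul_smul, mul_neg, inv_mul_cancel₀ hNk, neg_smul, one_smul,
          ← sub_eq_add_neg, ← hPhiDa] at h2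
      have h3 := J.sub_mem hE1 hPhiu
      rwa [show (Da - uu) - (Φ Da - uu) = Da - Φ Da from by abel] at h3
    -- decay of the iterates of Φ
    have hdecay : ∀ (r : ℕ) (s : Shape), depthL13 s < r → (Φ^[r] Da) s = 0 := by
      intro r
      induction r with
      | zero => intro s h; omega
      | succ r ih =>
          intro s h
          rw [Function.iterate_succ_apply']
          cases s with
          | leaf =>
              simp only [hPhi]
              rw [Pi.smul_apply, op_leaf', smul_zero]
          | node m l rr =>
              simp only [hPhi]
              rw [Pi.smul_apply, op_node']
              by_cases hm : (-(N : ℤ) - 1) = m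
              · rw [if_pos hm, ih l (by simp only [depthL13] at h ⊢; omega),
                  TensorProduct.zero_tmul]
                exact smul_zero (A := TensorProduct k (MonSp k (L × A) l) (MonSp k (L × A) rr)) ((N : k) + 1)⁻¹
              · rw [if_neg hm]
                exact smul_zero (A := TensorProduct k (MonSp k (L × A) l) (MonSp k (L × A) rr)) ((N : k) + 1)⁻¹
    -- telescoping family
    set ff : ℕ → FV k (L × A) := fun r => Φ^[r] Da - Φ^[r + 1] Da with hff
    have hffJ : ∀ r, ff r ∈ J := by
      intro r
      induction r with
      | zero =>
          simp only [hff, Function.iterate_zero_apply, Function.iterate_one]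
          exact hfix
      | succ r ih =>
          have he2 : ff (r + 1) = Φ (ff r) := by
            simp only [hff]
            rw [Function.iterate_succ_apply' Φ (r + 1) Da,
              Function.iterate_succ_apply' Φ r Da, hPhiSub]
          rw [he2]
          exact hPhiJ ih
    have hHS : HasSum ff Da := by
      have h0 := hasSum_of_bound ff (fun s => depthL13 s + 1)
        (fun s K hK => by
          have hK' : depthL13 s + 1 ≤ K := hK
          simp only [hff]
          rw [Pi.sub_apply, hdecay K s (by omega), hdecay (K + 1) s (by omega), sub_zero])
      convert h0 using 1
      funext s
      have hc : ∀ K ∈ Finset.range (depthL13 s + 1), ff K s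
          = (fun r => (Φ^[r] Da) s) K - (fun r => (Φ^[r] Da) s) (K + 1) := by
        intro K _
        simp only [hff]
        rw [Pi.sub_apply]
      rw [Finset.sum_congr rfl hc, Finset.sum_range_sub']
      simp only [Function.iterate_zero_apply]
      rw [hdecay (depthL13 s + 1) s (by omega), sub_zero]
    have h4 := hI.2 ff hffJ ⟨Da, hHS⟩
    rwa [hHS.tsum_eq] at h4
  -- Step 10 : conclude
  have hE8 := hgene avec gvec 1
  rw [IFA.gene, freeIFA_circ', IFA.D, freeIFA_circ', freeIFA_one'] at hE8
  rw [show ((1 : ℤ) : k) = (1 : k) by norm_num, one_smul,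
    show (1 : ℤ) - 1 = (0 : ℤ) by norm_num] at hE8
  have hDag : op k (L × A) 1 Da gvec ∈ J := hL _ _ hDaJ
  have h0 : op k (L × A) 0 avec gvec ∈ J := by
    have := J.sub_mem hE8 hDag
    rwa [add_sub_cancel_left] at this
  have := J.sub_mem h1 h0
  rwa [add_sub_cancel_left] at this

/-- **constraint on locality.** Let `s = s(g,a)` contain `a ∈ a`,
`g ∈ g` with `[g,a] = 1`.  Fix `N ≥ 1` and let `J` be the ideal generated by all the
souped-up generators (the `i`, `d`, `qc`, `qa`, `e` families together with the `s`,
`a`, `am` generators), plus the locality elements `a ∘ₙ g` for every `n ≥ 1` with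
`n ≠ N`.  Then `1 ∈ J`; hence the locality generators must omit `a ∘ₙ g` for at least
two positive values of `n` if the quotient is to be nonzero. -/
theorem statement13 (k : Type) [Field k] [CharZero k] (A : Type) [CommRing A]
    [Algebra k A] [Nontrivial A] (L : Type) [LieRing L] [LieAlgebra k L] [Module A L]
    [IsScalarTower k A L] (σ : SoupAct k A L)
    (a : A) (g : L) (hga : σ.act g a = 1) (N : ℕ) (hN : 1 ≤ N) :
    ι k (L × A) (sOne A L) ∈
      (freeIFA k (L × A) (sOne A L)).idealGenBy
        ((freeIFA k (L × A) (sOne A L)).baseGens ∪ soupGens k A L σ ∪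
          {w | ∃ n : ℤ, 1 ≤ n ∧ n ≠ (N : ℤ) ∧
            w = op k (L × A) n (ι k (L × A) ((0 : L), a))
                  (ι k (L × A) (g, (0 : A)))}) := by
  refine Submodule.mem_sInf.2 fun J hJ => ?_
  exact key13 k A L σ a g hga N hN J hJ.1 hJ.2
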